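/- (Comparison lemma on a fixed domain) Assume J₁, J₂ satisfy condition (J), d₁, d₂ > 0, h₀ > 0, T > 0, and set Ω₀ = [0, T] × [−h₀, h₀]. Suppose A, B, C, D ∈ L^∞(Ω₀) with B ≥ 0 and C ≥ 0, and (u, v) together with (u_t, v_t) are continuous on Ω₀ and satisfy: u_t(t,x) ≥ d₁∫_{−h₀}^{h₀} J₁(x−y) u(t,y) dy − d₁u + A·u + B·v and v_t(t,x) ≥ d₂∫_{−h₀}^{h₀} J₂(x−y) v(t,y) dy − d₂v + D·v + C·u for 0 < t ≤ T, −h₀ ≤ x ≤ h₀, together with u(0,x) ≥ 0 and v(0,x) ≥ 0 for |x| ≤ h₀. Then u(t,x) ≥ 0 and v(t,x) ≥ 0 for all 0 < t ≤ T and −h₀ ≤ x ≤ h₀. -/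

import Mathlib

open MeasureTheory Set Filter

noncomputable section

/-- Condition (J) on a dispersal kernel: continuous, bounded, nonnegative, even,
positive at the origin, with total integral one. -/
def KernelCond (J : ℝ → ℝ) : Prop :=
  Continuous J ∧ (∃ C : ℝ, ∀ x : ℝ, |J x| ≤ C) ∧ (∀ x : ℝ, 0 ≤ J x) ∧
    (∀ x : ℝ, J (-x) = J x) ∧ 0 < J 0 ∧ (∫ x : ℝ, J x) = 1

/-- Condition (HG) on the reaction functions `H`, `G` (with constants `a`, `b`). -/
def HGcond (a b : ℝ) (H G : ℝ → ℝ) : Prop :=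
  ContDiffOn ℝ 2 H (Ici 0) ∧ ContDiffOn ℝ 2 G (Ici 0) ∧
    H 0 = 0 ∧ G 0 = 0 ∧
    (∀ z : ℝ, 0 ≤ z → 0 < deriv H z ∧ 0 < deriv G z) ∧
    (∀ z : ℝ, 0 < z → deriv (deriv H) z < 0 ∧ deriv (deriv G) z < 0) ∧
    (∃ zbar : ℝ, 0 < zbar ∧ G (H zbar / a) < b * zbar)

/-- Condition (I) on the initial data. -/
def InitCond (h₀ : ℝ) (u₀ v₀ : ℝ → ℝ) : Prop :=
  ContinuousOn u₀ (Icc (-h₀) h₀) ∧ ContinuousOn v₀ (Icc (-h₀) h₀) ∧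
    u₀ (-h₀) = 0 ∧ u₀ h₀ = 0 ∧ v₀ (-h₀) = 0 ∧ v₀ h₀ = 0 ∧
    (∀ x ∈ Ioo (-h₀) h₀, 0 < u₀ x ∧ 0 < v₀ x)

/-- A (global-in-time) solution of the free boundary problem (P). -/
def IsGlobalSolution (J₁ J₂ H G : ℝ → ℝ) (d₁ d₂ a b μ ρ h₀ : ℝ)
    (u₀ v₀ : ℝ → ℝ) (u v : ℝ → ℝ → ℝ) (g h : ℝ → ℝ) : Prop :=
  ContinuousOn g (Ici 0) ∧ ContinuousOn h (Ici 0) ∧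
  g 0 = -h₀ ∧ h 0 = h₀ ∧
  StrictMonoOn h (Ici 0) ∧ StrictAntiOn g (Ici 0) ∧
  ContinuousOn (fun p : ℝ × ℝ => u p.1 p.2)
    {p : ℝ × ℝ | 0 ≤ p.1 ∧ p.2 ∈ Icc (g p.1) (h p.1)} ∧
  ContinuousOn (fun p : ℝ × ℝ => v p.1 p.2)
    {p : ℝ × ℝ | 0 ≤ p.1 ∧ p.2 ∈ Icc (g p.1) (h p.1)} ∧
  (∀ t : ℝ, 0 ≤ t → ∀ x : ℝ, x ∉ Icc (g t) (h t) → u t x = 0 ∧ v t x = 0) ∧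
  (∀ t : ℝ, 0 ≤ t → ∀ x : ℝ, 0 ≤ u t x ∧ 0 ≤ v t x) ∧
  (∀ t : ℝ, 0 < t → ∀ x ∈ Ioo (g t) (h t),
    HasDerivAt (fun s => u s x)
      (d₁ * ((∫ y in g t..h t, J₁ (x - y) * u t y) - u t x) - a * u t x + H (v t x)) t ∧
    HasDerivAt (fun s => v s x)
      (d₂ * ((∫ y in g t..h t, J₂ (x - y) * v t y) - v t x) - b * v t x + G (u t x)) t) ∧
  (∀ t : ℝ, 0 < t → u t (g t) = 0 ∧ u t (h t) = 0 ∧ v t (g t) = 0 ∧ v t (h t) = 0) ∧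
  (∀ t : ℝ, 0 < t →
    HasDerivAt h
      (μ * ((∫ x in g t..h t, ∫ y in Ioi (h t), J₁ (x - y) * u t x) +
        ρ * (∫ x in g t..h t, ∫ y in Ioi (h t), J₂ (x - y) * v t x))) t ∧
    HasDerivAt g
      (-(μ * ((∫ x in g t..h t, ∫ y in Iio (g t), J₁ (x - y) * u t x) +
        ρ * (∫ x in g t..h t, ∫ y in Iio (g t), J₂ (x - y) * v t x)))) t) ∧
  (∀ x ∈ Icc (-h₀) h₀, u 0 x = u₀ x ∧ v 0 x = v₀ x)

/-- Vanishing: the habitat stays bounded and `(u,v) → (0,0)` uniformly on `[g(t), h(t)]`. -/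
def Vanishing (u v : ℝ → ℝ → ℝ) (g h : ℝ → ℝ) : Prop :=
  (∃ l : ℝ, Tendsto (fun t => h t - g t) atTop (nhds l)) ∧
  (∀ ε : ℝ, 0 < ε → ∃ T : ℝ, ∀ t : ℝ, T ≤ t → ∀ x ∈ Icc (g t) (h t),
    |u t x| < ε ∧ |v t x| < ε)

/-- Spreading: the habitat expands to all of `ℝ` and `(u,v) → (K₁,K₂)` locally uniformly. -/
def Spreading (u v : ℝ → ℝ → ℝ) (g h : ℝ → ℝ) (K₁ K₂ : ℝ) : Prop :=
  Tendsto h atTop atTop ∧ Tendsto g atTop atBot ∧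
  (∀ ε : ℝ, 0 < ε → ∀ R : ℝ, 0 < R → ∃ T : ℝ, ∀ t : ℝ, T ≤ t → ∀ x ∈ Icc (-R) R,
    |u t x - K₁| < ε ∧ |v t x - K₂| < ε)

/-- `lam` is a principal eigenvalue of the nonlocal cooperative operator
`M = D(N - I) + A` on `[L₁, L₂]`: it admits a continuous, componentwise strictly
positive eigenfunction pair. -/
def IsPrincipalEV (J₁ J₂ : ℝ → ℝ) (d₁ d₂ L₁ L₂ a11 a12 a21 a22 lam : ℝ) : Prop :=
  ∃ φ₁ φ₂ : ℝ → ℝ,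
    ContinuousOn φ₁ (Icc L₁ L₂) ∧ ContinuousOn φ₂ (Icc L₁ L₂) ∧
    (∀ x ∈ Icc L₁ L₂, 0 < φ₁ x ∧ 0 < φ₂ x) ∧
    (∀ x ∈ Icc L₁ L₂,
      d₁ * ((∫ y in L₁..L₂, J₁ (x - y) * φ₁ y) - φ₁ x) + a11 * φ₁ x + a12 * φ₂ x
        + lam * φ₁ x = 0 ∧
      d₂ * ((∫ y in L₁..L₂, J₂ (x - y) * φ₂ y) - φ₂ x) + a21 * φ₁ x + a22 * φ₂ x
        + lam * φ₂ x = 0)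

/-- `lam` is the principal eigenvalue `λ_p(L₁, L₂)` of the linearization of the
epidemic system at `(0,0)`. -/
def IsLamP (J₁ J₂ H G : ℝ → ℝ) (d₁ d₂ a b L₁ L₂ lam : ℝ) : Prop :=
  IsPrincipalEV J₁ J₂ (d₁ / deriv H 0) (d₂ / deriv G 0) L₁ L₂
    (-(a / deriv H 0)) 1 1 (-(b / deriv G 0)) lam

/-- A (continuous) solution of the steady-state system on `[L₁, L₂]`. -/
def SteadyState (J₁ J₂ H G : ℝ → ℝ) (d₁ d₂ a b L₁ L₂ : ℝ) (U V : ℝ → ℝ) : Prop :=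
  ContinuousOn U (Icc L₁ L₂) ∧ ContinuousOn V (Icc L₁ L₂) ∧
  ∀ x ∈ Icc L₁ L₂,
    d₁ * ((∫ y in L₁..L₂, J₁ (x - y) * U y) - U x) - a * U x + H (V x) = 0 ∧
    d₂ * ((∫ y in L₁..L₂, J₂ (x - y) * V y) - V x) - b * V x + G (U x) = 0

/-- A solution of the fixed-boundary evolution problem on `[L₁, L₂]`. -/
def FixedSol (J₁ J₂ H G : ℝ → ℝ) (d₁ d₂ a b L₁ L₂ : ℝ) (U₀ V₀ : ℝ → ℝ)
    (U V : ℝ → ℝ → ℝ) : Prop :=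
  ContinuousOn (fun p : ℝ × ℝ => U p.1 p.2) (Ici 0 ×ˢ Icc L₁ L₂) ∧
  ContinuousOn (fun p : ℝ × ℝ => V p.1 p.2) (Ici 0 ×ˢ Icc L₁ L₂) ∧
  (∀ x ∈ Icc L₁ L₂, U 0 x = U₀ x ∧ V 0 x = V₀ x) ∧
  (∀ t : ℝ, 0 < t → ∀ x ∈ Icc L₁ L₂,
    HasDerivAt (fun s => U s x)
      (d₁ * ((∫ y in L₁..L₂, J₁ (x - y) * U t y) - U t x) - a * U t x + H (V t x)) t ∧
    HasDerivAt (fun s => V s x)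
      (d₂ * ((∫ y in L₁..L₂, J₂ (x - y) * V t y) - V t x) - b * V t x + G (U t x)) t)

/-- One component of the nonlocal cooperative operator `M`:
`(Mc J d L₁ L₂ c₁ c₂ φ ψ)(x) = d (∫ J(x-y) φ(y) dy − φ(x)) + c₁ φ(x) + c₂ ψ(x)`. -/
def Mcomp (J : ℝ → ℝ) (d L₁ L₂ c₁ c₂ : ℝ) (φ ψ : ℝ → ℝ) : ℝ → ℝ :=
  fun x => d * ((∫ y in L₁..L₂, J (x - y) * φ y) - φ x) + c₁ * φ x + c₂ * ψ x


lemma kernel_integrable {J : ℝ → ℝ} (hJ : KernelCond J) : Integrable J := by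
  by_contra h
  have h1 := hJ.2.2.2.2.2
  rw [integral_undef h] at h1
  norm_num at h1

lemma kernel_interval_le_one {J : ℝ → ℝ} (hJ : KernelCond J) {a b : ℝ} (hab : a ≤ b) (x : ℝ) :
    (∫ y in a..b, J (x - y)) ≤ 1 := by
  have heq : (fun y : ℝ => J (x - y)) = fun y : ℝ => J (y - x) := by
    funext y
    rw [← hJ.2.2.2.1 (y - x)]
    ring_nf
  have hint : Integrable (fun y : ℝ => J (x - y)) := by
    rw [heq]; exact (kernel_integrable hJ).comp_sub_right x
  rw [intervalIntegral.integral_of_le hab]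
  calc (∫ y in Set.Ioc a b, J (x - y)) ≤ ∫ y : ℝ, J (x - y) :=
        setIntegral_le_integral hint (Filter.Eventually.of_forall fun y => hJ.2.2.1 _)
    _ = 1 := by rw [heq, integral_sub_right_eq_self J x]; exact hJ.2.2.2.2.2

lemma deriv_nonpos_of_min {f : ℝ → ℝ} {f' a b : ℝ} (hab : a < b)
    (hd : HasDerivWithinAt f f' (Icc a b) b) (hmin : ∀ t ∈ Icc a b, f b ≤ f t) : f' ≤ 0 := by
  have h1 : Tendsto (slope f b) (nhdsWithin b (Icc a b \ {b})) (nhds f') :=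
    hasDerivWithinAt_iff_tendsto_slope.mp hd
  rw [Icc_sdiff_right] at h1
  haveI := right_nhdsWithin_Ico_neBot hab
  refine le_of_tendsto h1 ?_
  filter_upwards [self_mem_nhdsWithin] with t ht
  rw [slope_def_field]
  exact div_nonpos_of_nonneg_of_nonpos (sub_nonneg.mpr (hmin t (Ico_subset_Icc_self ht)))
    (sub_nonpos.mpr ht.2.le)

lemma key_contra {J : ℝ → ℝ} (hJ : KernelCond J) {d h₀ T M K : ℝ} (hd : 0 < d)
    (hh₀ : 0 < h₀) (hK : 2 * M < K)
    {a bc : ℝ} (ha : |a| ≤ M) (hb : 0 ≤ bc) (hbM : |bc| ≤ M)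
    {u v : ℝ → ℝ → ℝ} {utv : ℝ → ℝ → ℝ}
    {t₀ x₀ m : ℝ} (ht₀ : t₀ ∈ Ioc 0 T) (hx₀ : x₀ ∈ Icc (-h₀) h₀) (hm : m < 0)
    (hmin : ∀ y ∈ Icc (-h₀) h₀, m * Real.exp (K * t₀) ≤ u t₀ y)
    (hvge : m * Real.exp (K * t₀) ≤ v t₀ x₀)
    (hattain : u t₀ x₀ = m * Real.exp (K * t₀))
    (hglobalmin : ∀ t ∈ Icc 0 T, m ≤ Real.exp (-(K * t)) * u t x₀)
    (hcontu : ContinuousOn (fun y => u t₀ y) (Icc (-h₀) h₀))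
    (hderiv : HasDerivWithinAt (fun s => u s x₀) (utv t₀ x₀) (Icc 0 T) t₀)
    (hineq : d * ((∫ y in (-h₀)..h₀, J (x₀ - y) * u t₀ y) - u t₀ x₀)
        + a * u t₀ x₀ + bc * v t₀ x₀ ≤ utv t₀ x₀) : False := by
  set m' : ℝ := m * Real.exp (K * t₀) with hm'def
  have hm' : m' < 0 := mul_neg_of_neg_of_pos hm (Real.exp_pos _)
  have hle : -h₀ ≤ h₀ := by linarith
  have hexp : HasDerivAt (fun s : ℝ => Real.exp (-(K * s)))
      (-K * Real.exp (-(K * t₀))) t₀ := by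
    have h1 : HasDerivAt (fun s : ℝ => -(K * s)) (-K) t₀ := by
      exact (((hasDerivAt_id t₀).const_mul K).neg).congr_deriv (by ring)
    have h2 := (Real.hasDerivAt_exp (-(K * t₀))).comp t₀ h1
    exact h2.congr_deriv (by ring)
  have hw : HasDerivWithinAt (fun s : ℝ => Real.exp (-(K * s)) * u s x₀)
      (-K * Real.exp (-(K * t₀)) * u t₀ x₀ + Real.exp (-(K * t₀)) * utv t₀ x₀)
      (Icc 0 T) t₀ := (hexp.hasDerivWithinAt).mul hderiv
  have hwmin : ∀ t ∈ Icc 0 t₀,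
      Real.exp (-(K * t₀)) * u t₀ x₀ ≤ Real.exp (-(K * t)) * u t x₀ := by
    intro t ht
    have htT : t ∈ Icc 0 T := ⟨ht.1, ht.2.trans ht₀.2⟩
    have h2 : Real.exp (-(K * t₀)) * u t₀ x₀ = m := by
      rw [hattain, Real.exp_neg]
      field_simp
      rw [hm'def, mul_comm]
    rw [h2]
    exact hglobalmin t htT
  have hd0 : -K * Real.exp (-(K * t₀)) * u t₀ x₀ + Real.exp (-(K * t₀)) * utv t₀ x₀ ≤ 0 :=
    deriv_nonpos_of_min ht₀.1 (hw.mono (Icc_subset_Icc le_rfl ht₀.2)) hwmin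
  have hut : utv t₀ x₀ ≤ K * m' := by
    have he : (0:ℝ) < Real.exp (-(K * t₀)) := Real.exp_pos _
    have h3 : Real.exp (-(K * t₀)) * utv t₀ x₀ ≤ Real.exp (-(K * t₀)) * (K * m') := by
      rw [hattain] at hd0
      nlinarith
    exact le_of_mul_le_mul_left h3 he
  have hcont1 : ContinuousOn (fun y => J (x₀ - y) * u t₀ y) (Icc (-h₀) h₀) :=
    ((hJ.1.comp (continuous_const.sub continuous_id)).continuousOn).mul hcontu
  have hint1 : IntervalIntegrable (fun y => J (x₀ - y) * u t₀ y) volume (-h₀) h₀ := by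
    apply ContinuousOn.intervalIntegrable
    rwa [uIcc_of_le hle]
  have hint2 : IntervalIntegrable (fun y => J (x₀ - y) * m') volume (-h₀) h₀ :=
    ((hJ.1.comp (continuous_const.sub continuous_id)).mul
      continuous_const).intervalIntegrable _ _
  have hIle : (∫ y in (-h₀)..h₀, J (x₀ - y)) ≤ 1 := kernel_interval_le_one hJ hle x₀
  have hInn : 0 ≤ (∫ y in (-h₀)..h₀, J (x₀ - y)) :=
    intervalIntegral.integral_nonneg hle (fun y _ => hJ.2.2.1 _)
  have hmono : (∫ y in (-h₀)..h₀, J (x₀ - y) * m')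
      ≤ ∫ y in (-h₀)..h₀, J (x₀ - y) * u t₀ y := by
    apply intervalIntegral.integral_mono_on hle hint2 hint1
    intro y hy
    exact mul_le_mul_of_nonneg_left (hmin y hy) (hJ.2.2.1 _)
  have hmul : (∫ y in (-h₀)..h₀, J (x₀ - y) * m')
      = (∫ y in (-h₀)..h₀, J (x₀ - y)) * m' := by
    rw [← intervalIntegral.integral_mul_const]
  have hSge : (∫ y in (-h₀)..h₀, J (x₀ - y) * u t₀ y) - u t₀ x₀ ≥ 0 := by
    rw [hattain]
    have : (∫ y in (-h₀)..h₀, J (x₀ - y)) * m' ≥ m' := by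
      nlinarith
    linarith [hmono, hmul ▸ this]
  have habs := abs_le.mp ha
  have hbabs := abs_le.mp hbM
  have hbv : bc * m' ≤ bc * v t₀ x₀ := mul_le_mul_of_nonneg_left hvge hb
  rw [hattain] at hineq
  nlinarith [mul_nonneg hd.le hSge, mul_pos (neg_pos.mpr hm') (sub_pos.mpr
    (lt_of_le_of_lt (by linarith : a + bc ≤ 2 * M) hK))]

/-- comparison lemma on a fixed domain. -/
theorem comparison_fixed_domain
    (J₁ J₂ : ℝ → ℝ) (hJ₁ : KernelCond J₁) (hJ₂ : KernelCond J₂)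
    (d₁ d₂ h₀ T : ℝ) (hd₁ : 0 < d₁) (hd₂ : 0 < d₂) (hh₀ : 0 < h₀) (hT : 0 < T)
    (A B C D : ℝ → ℝ → ℝ)
    (hbdd : ∃ M : ℝ, ∀ t ∈ Icc 0 T, ∀ x ∈ Icc (-h₀) h₀,
      |A t x| ≤ M ∧ |B t x| ≤ M ∧ |C t x| ≤ M ∧ |D t x| ≤ M)
    (hB : ∀ t ∈ Icc 0 T, ∀ x ∈ Icc (-h₀) h₀, 0 ≤ B t x)
    (hC : ∀ t ∈ Icc 0 T, ∀ x ∈ Icc (-h₀) h₀, 0 ≤ C t x)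
    (u v ut vt : ℝ → ℝ → ℝ)
    (hu : ContinuousOn (fun p : ℝ × ℝ => u p.1 p.2) (Icc 0 T ×ˢ Icc (-h₀) h₀))
    (hv : ContinuousOn (fun p : ℝ × ℝ => v p.1 p.2) (Icc 0 T ×ˢ Icc (-h₀) h₀))
    (hutc : ContinuousOn (fun p : ℝ × ℝ => ut p.1 p.2) (Icc 0 T ×ˢ Icc (-h₀) h₀))
    (hvtc : ContinuousOn (fun p : ℝ × ℝ => vt p.1 p.2) (Icc 0 T ×ˢ Icc (-h₀) h₀))
    (hderiv : ∀ t ∈ Ioc 0 T, ∀ x ∈ Icc (-h₀) h₀,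
      HasDerivWithinAt (fun s => u s x) (ut t x) (Icc 0 T) t ∧
      HasDerivWithinAt (fun s => v s x) (vt t x) (Icc 0 T) t)
    (hineq : ∀ t ∈ Ioc 0 T, ∀ x ∈ Icc (-h₀) h₀,
      d₁ * ((∫ y in (-h₀)..h₀, J₁ (x - y) * u t y) - u t x)
        + A t x * u t x + B t x * v t x ≤ ut t x ∧
      d₂ * ((∫ y in (-h₀)..h₀, J₂ (x - y) * v t y) - v t x)
        + D t x * v t x + C t x * u t x ≤ vt t x)
    (hinit : ∀ x ∈ Icc (-h₀) h₀, 0 ≤ u 0 x ∧ 0 ≤ v 0 x) :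
    ∀ t ∈ Ioc 0 T, ∀ x ∈ Icc (-h₀) h₀, 0 ≤ u t x ∧ 0 ≤ v t x := by
  obtain ⟨M, hM⟩ := hbdd
  have h0T : (0:ℝ) ∈ Icc 0 T := ⟨le_rfl, hT.le⟩
  have h0x : (0:ℝ) ∈ Icc (-h₀) h₀ := ⟨by linarith, hh₀.le⟩
  have hMnn : 0 ≤ M := (abs_nonneg _).trans (hM 0 h0T 0 h0x).1
  set K : ℝ := 2 * M + 1 with hKdef
  have hK : 2 * M < K := by simp [hKdef]
  by_contra hcon
  push_neg at hcon
  obtain ⟨t₁, ht₁, x₁, hx₁, hneg⟩ := hcon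
  have hScomp : IsCompact (Icc (0:ℝ) T ×ˢ Icc (-h₀) h₀) := isCompact_Icc.prod isCompact_Icc
  have hSne : (Icc (0:ℝ) T ×ˢ Icc (-h₀) h₀).Nonempty := ⟨(0,0), h0T, h0x⟩
  have hFcont : ContinuousOn
      (fun p : ℝ × ℝ => Real.exp (-(K * p.1)) * min (u p.1 p.2) (v p.1 p.2))
      (Icc (0:ℝ) T ×ˢ Icc (-h₀) h₀) :=
    ((Real.continuous_exp.comp (continuous_const.mul continuous_fst).neg).continuousOn).mul
      (hu.inf hv)
  obtain ⟨⟨t₀, x₀⟩, hp₀S, hp₀min⟩ := hScomp.exists_isMinOn hSne hFcont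
  set m : ℝ := Real.exp (-(K * t₀)) * min (u t₀ x₀) (v t₀ x₀) with hmdef
  have hminlt : min (u t₁ x₁) (v t₁ x₁) < 0 := by
    rcases lt_or_ge (u t₁ x₁) 0 with h | h
    · exact lt_of_le_of_lt (min_le_left _ _) h
    · exact lt_of_le_of_lt (min_le_right _ _) (hneg h)
  have hp1S : (t₁, x₁) ∈ Icc (0:ℝ) T ×ˢ Icc (-h₀) h₀ := ⟨⟨ht₁.1.le, ht₁.2⟩, hx₁⟩
  have hm : m < 0 :=
    lt_of_le_of_lt (isMinOn_iff.mp hp₀min _ hp1S)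
      (mul_neg_of_pos_of_neg (Real.exp_pos _) hminlt)
  have ht₀Icc : t₀ ∈ Icc (0:ℝ) T := hp₀S.1
  have hx₀Icc : x₀ ∈ Icc (-h₀) h₀ := hp₀S.2
  have ht₀pos : 0 < t₀ := by
    rcases eq_or_lt_of_le ht₀Icc.1 with h | h
    · exfalso
      have h1 := hinit x₀ hx₀Icc
      have h2 : 0 ≤ m := by
        rw [hmdef, ← h]
        exact mul_nonneg (Real.exp_pos _).le (le_min h1.1 h1.2)
      linarith
    · exact h
  have ht₀Ioc : t₀ ∈ Ioc 0 T := ⟨ht₀pos, ht₀Icc.2⟩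
  have hp₀le : ∀ t ∈ Icc (0:ℝ) T, ∀ x ∈ Icc (-h₀) h₀,
      m ≤ Real.exp (-(K * t)) * min (u t x) (v t x) := by
    intro t ht x hx
    exact isMinOn_iff.mp hp₀min (t, x) ⟨ht, hx⟩
  have hmu : ∀ t ∈ Icc (0:ℝ) T, ∀ x ∈ Icc (-h₀) h₀,
      m ≤ Real.exp (-(K * t)) * u t x := by
    intro t ht x hx
    exact (hp₀le t ht x hx).trans
      (mul_le_mul_of_nonneg_left (min_le_left _ _) (Real.exp_pos _).le)
  have hmv : ∀ t ∈ Icc (0:ℝ) T, ∀ x ∈ Icc (-h₀) h₀,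
      m ≤ Real.exp (-(K * t)) * v t x := by
    intro t ht x hx
    exact (hp₀le t ht x hx).trans
      (mul_le_mul_of_nonneg_left (min_le_right _ _) (Real.exp_pos _).le)
  have hconv : ∀ c : ℝ, m ≤ Real.exp (-(K * t₀)) * c → m * Real.exp (K * t₀) ≤ c := by
    intro c hc
    have he : Real.exp (-(K * t₀)) * Real.exp (K * t₀) = 1 := by
      rw [← Real.exp_add]; simp
    calc m * Real.exp (K * t₀) ≤ (Real.exp (-(K * t₀)) * c) * Real.exp (K * t₀) :=
          mul_le_mul_of_nonneg_right hc (Real.exp_pos _).le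
      _ = c := by rw [mul_comm (Real.exp (-(K * t₀))) c, mul_assoc, he, mul_one]
  have hminu : ∀ y ∈ Icc (-h₀) h₀, m * Real.exp (K * t₀) ≤ u t₀ y :=
    fun y hy => hconv _ (hmu t₀ ht₀Icc y hy)
  have hminv : ∀ y ∈ Icc (-h₀) h₀, m * Real.exp (K * t₀) ≤ v t₀ y :=
    fun y hy => hconv _ (hmv t₀ ht₀Icc y hy)
  have hMA := hM t₀ ht₀Icc x₀ hx₀Icc
  have hcontmap : ContinuousOn (fun y : ℝ => ((t₀ : ℝ), y)) (Icc (-h₀) h₀) :=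
    (continuous_const.prodMk continuous_id).continuousOn
  have hcontu : ContinuousOn (fun y => u t₀ y) (Icc (-h₀) h₀) :=
    hu.comp hcontmap (fun y hy => Set.mk_mem_prod ht₀Icc hy)
  have hcontv : ContinuousOn (fun y => v t₀ y) (Icc (-h₀) h₀) :=
    hv.comp hcontmap (fun y hy => Set.mk_mem_prod ht₀Icc hy)
  rcases min_choice (u t₀ x₀) (v t₀ x₀) with hc | hc
  · have hattain : u t₀ x₀ = m * Real.exp (K * t₀) := by
      rw [hmdef, hc, Real.exp_neg, mul_comm (Real.exp (K * t₀))⁻¹ (u t₀ x₀), mul_assoc,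
        inv_mul_cancel₀ (Real.exp_ne_zero _), mul_one]
    exact key_contra hJ₁ hd₁ hh₀ hK hMA.1 (hB t₀ ht₀Icc x₀ hx₀Icc) hMA.2.1 ht₀Ioc hx₀Icc hm
      hminu (hminv x₀ hx₀Icc) hattain (fun t ht => hmu t ht x₀ hx₀Icc) hcontu
      (hderiv t₀ ht₀Ioc x₀ hx₀Icc).1 (hineq t₀ ht₀Ioc x₀ hx₀Icc).1
  · have hattain : v t₀ x₀ = m * Real.exp (K * t₀) := by
      rw [hmdef, hc, Real.exp_neg, mul_comm (Real.exp (K * t₀))⁻¹ (v t₀ x₀), mul_assoc,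
        inv_mul_cancel₀ (Real.exp_ne_zero _), mul_one]
    exact key_contra hJ₂ hd₂ hh₀ hK hMA.2.2.2 (hC t₀ ht₀Icc x₀ hx₀Icc) hMA.2.2.1 ht₀Ioc hx₀Icc hm
      hminv (hminu x₀ hx₀Icc) hattain (fun t ht => hmv t ht x₀ hx₀Icc) hcontv
      (hderiv t₀ ht₀Ioc x₀ hx₀Icc).2 (hineq t₀ ht₀Ioc x₀ hx₀Icc).2


end
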